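/- Let 𝔻 be a relative entropy, n ∈ ℕ and p ∈ P(n). Then for all q, q̃ ∈ P_{>0}(n) satisfying ‖q − q̃‖_∞ < min{min_i q_i, min_i q̃_i}: |𝔻(p‖q) − 𝔻(p‖q̃)| ≤ log( 1 + ‖q − q̃‖_∞ / min{min_i q_i, min_i q̃_i} ), where ‖q − q̃‖_∞ = max_{i∈[n]} |q_i − q̃_i|. In particular, both 𝔻(p‖q) and 𝔻(p‖q̃) are finite at such points and q ↦ 𝔻(p‖q) is continuous on P_{>0}(n). -/

import Mathlib

open scoped BigOperators ENNReal

/-- A probability vector: nonnegative entries summing to 1. -/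
def IsProbVec {n : ℕ} (p : Fin n → ℝ) : Prop :=
  (∀ i, 0 ≤ p i) ∧ ∑ i, p i = 1

/-- The uniform probability vector on `n` outcomes. -/
noncomputable def uniform (n : ℕ) : Fin n → ℝ := fun _ => (n : ℝ)⁻¹

/-- Kronecker (tensor) product of two vectors. -/
noncomputable def kron {n m : ℕ} (p : Fin n → ℝ) (q : Fin m → ℝ) : Fin (n * m) → ℝ :=
  fun i => p (finProdFinEquiv.symm i).1 * q (finProdFinEquiv.symm i).2

/-- Sum of the `k` largest entries (for vectors with nonnegative entries):
the supremum of sums over subsets of at most `k` indices. -/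
noncomputable def maxPartialSum {n : ℕ} (p : Fin n → ℝ) (k : ℕ) : ℝ :=
  sSup { x | ∃ s : Finset (Fin n), s.card ≤ k ∧ ∑ i ∈ s, p i = x }

/-- `p` majorises `q`: every partial sum of the `k` largest entries of `p`
dominates that of `q` (entries beyond a vector's length count as 0). -/
def Majorizes {n m : ℕ} (p : Fin n → ℝ) (q : Fin m → ℝ) : Prop :=
  ∀ k : ℕ, maxPartialSum q k ≤ maxPartialSum p k

/-- A channel: an `n × m` row-stochastic matrix. -/
def IsStochastic {n m : ℕ} (W : Matrix (Fin n) (Fin m) ℝ) : Prop :=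
  (∀ i j, 0 ≤ W i j) ∧ ∀ i, ∑ j, W i j = 1

/-- Relative majorisation of pairs: some channel maps `(p, q)` to `(p', q')`. -/
def RelMaj {n m : ℕ} (p q : Fin n → ℝ) (p' q' : Fin m → ℝ) : Prop :=
  ∃ W : Matrix (Fin n) (Fin m) ℝ, IsStochastic W ∧
    Matrix.vecMul p W = p' ∧ Matrix.vecMul q W = q'

/-- An entropy: a `[0,∞)`-valued function on probability vectors of all finite dimensions
that is monotone under mixing (majorisation), additive for Kronecker products,
and normalised so that `H(u₂) = log 2` (binary logarithm). -/
structure IsEntropy (H : (n : ℕ) → (Fin n → ℝ) → ℝ) : Prop where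
  nonneg : ∀ {n : ℕ} (p : Fin n → ℝ), IsProbVec p → 0 ≤ H n p
  mono : ∀ {n m : ℕ} (p : Fin n → ℝ) (p' : Fin m → ℝ),
    IsProbVec p → IsProbVec p' → Majorizes p p' → H n p ≤ H m p'
  additive : ∀ {n m : ℕ} (p : Fin n → ℝ) (q : Fin m → ℝ),
    IsProbVec p → IsProbVec q → H (n * m) (kron p q) = H n p + H m q
  normalized : H 2 (uniform 2) = Real.logb 2 2

/-- A monotone divergence: a `[0,∞]`-valued function on pairs of probability vectors of
equal finite dimension satisfying the data-processing inequality and `𝔻(1‖1) = 0`. -/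
structure IsMonotoneDivergence (D : (n : ℕ) → (Fin n → ℝ) → (Fin n → ℝ) → ℝ≥0∞) : Prop where
  dpi : ∀ {n m : ℕ} (p q : Fin n → ℝ) (p' q' : Fin m → ℝ),
    IsProbVec p → IsProbVec q → IsProbVec p' → IsProbVec q' →
    RelMaj p q p' q' → D m p' q' ≤ D n p q
  normalized : D 1 (fun _ => 1) (fun _ => 1) = 0

/-- A relative entropy: data-processing inequality, additivity for Kronecker products,
and the normalisation `𝔻(e₁‖u₂) = log 2` (binary logarithm). -/
structure IsRelativeEntropy (D : (n : ℕ) → (Fin n → ℝ) → (Fin n → ℝ) → ℝ≥0∞) : Prop where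
  dpi : ∀ {n m : ℕ} (p q : Fin n → ℝ) (p' q' : Fin m → ℝ),
    IsProbVec p → IsProbVec q → IsProbVec p' → IsProbVec q' →
    RelMaj p q p' q' → D m p' q' ≤ D n p q
  additive : ∀ {n m : ℕ} (p₁ q₁ : Fin n → ℝ) (p₂ q₂ : Fin m → ℝ),
    IsProbVec p₁ → IsProbVec q₁ → IsProbVec p₂ → IsProbVec q₂ →
    D (n * m) (kron p₁ p₂) (kron q₁ q₂) = D n p₁ q₁ + D m p₂ q₂
  normalized : D 2 ![1, 0] ![1/2, 1/2] = ENNReal.ofReal (Real.logb 2 2)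

/-- The `∞`-norm distance `‖q − q̃‖_∞ = max_i |q_i − q̃_i|`. -/
noncomputable def supDist {n : ℕ} (q q' : Fin n → ℝ) : ℝ :=
  sSup { x | ∃ i, x = |q i - q' i| }

/-- The smallest entry `min_i q_i` of a vector. -/
noncomputable def minEntry {n : ℕ} (q : Fin n → ℝ) : ℝ :=
  sInf { x | ∃ i, x = q i }

noncomputable def kpow {n : ℕ} (p : Fin n → ℝ) : (m : ℕ) → Fin (n ^ m) → ℝ
  | 0 => fun _ => 1
  | m+1 => kron (kpow p m) p

lemma vec2_apply (x y : ℝ) (b : Fin 2) : ![x, y] b = if b = 0 then x else y := by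
  fin_cases b <;> simp

lemma kron_sum {n m : ℕ} (p : Fin n → ℝ) (q : Fin m → ℝ) :
    ∑ i, kron p q i = (∑ i, p i) * (∑ j, q j) := by
  have h := Equiv.sum_comp finProdFinEquiv.symm
      (fun x : Fin n × Fin m => p x.1 * q x.2)
  unfold kron
  rw [h, Fintype.sum_prod_type, Finset.sum_mul]
  exact Finset.sum_congr rfl fun a _ => by rw [Finset.mul_sum]

lemma kron_probVec {n m : ℕ} {p : Fin n → ℝ} {q : Fin m → ℝ}
    (hp : IsProbVec p) (hq : IsProbVec q) : IsProbVec (kron p q) := by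
  refine ⟨fun i => mul_nonneg (hp.1 _) (hq.1 _), ?_⟩
  rw [kron_sum, hp.2, hq.2, mul_one]

lemma kpow_probVec {n : ℕ} {p : Fin n → ℝ} (hp : IsProbVec p) (m : ℕ) :
    IsProbVec (kpow p m) := by
  induction m with
  | zero => exact ⟨fun _ => zero_le_one, by simp [kpow]; exact Finset.card_univ.trans (Fintype.card_fin _)⟩
  | succ m ih => exact kron_probVec ih hp
lemma probVec_e1 : IsProbVec ![(1:ℝ), 0] :=
  ⟨fun i => by fin_cases i <;> norm_num, by simp [Fin.sum_univ_two]⟩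

lemma probVec_u2 : IsProbVec ![(1:ℝ)/2, 1/2] :=
  ⟨fun i => by fin_cases i <;> norm_num, by norm_num [Fin.sum_univ_two]⟩

lemma probVec_vc {c : ℝ} (h0 : 0 ≤ c) (h1 : c ≤ 1) : IsProbVec ![c, 1 - c] :=
  ⟨fun i => by fin_cases i <;> simp <;> linarith, by simp [Fin.sum_univ_two]⟩

lemma probVec_one : IsProbVec (fun _ : Fin 1 => (1:ℝ)) :=
  ⟨fun _ => zero_le_one, by simp⟩

lemma D_one_le (D : (n : ℕ) → (Fin n → ℝ) → (Fin n → ℝ) → ℝ≥0∞)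
    (hD : IsRelativeEntropy D) :
    D 1 (fun _ => 1) (fun _ => 1) ≤ 1 := by
  have hrm : RelMaj ![(1:ℝ), 0] ![(1:ℝ)/2, 1/2] (fun _ : Fin 1 => (1:ℝ))
      (fun _ : Fin 1 => (1:ℝ)) := by
    refine ⟨fun _ _ => 1, ⟨fun _ _ => zero_le_one, fun i => by simp⟩, ?_, ?_⟩ <;>
    · funext j
      simp [Matrix.vecMul, dotProduct, Fin.sum_univ_two]
      try norm_num
  have h := hD.dpi _ _ _ _ probVec_e1 probVec_u2 probVec_one probVec_one hrm
  rw [hD.normalized] at h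
  simpa using h

lemma D_one (D : (n : ℕ) → (Fin n → ℝ) → (Fin n → ℝ) → ℝ≥0∞)
    (hD : IsRelativeEntropy D) :
    D 1 (fun _ => 1) (fun _ => 1) = 0 := by
  set x := D 1 (fun _ => 1) (fun _ => 1) with hx
  have hne : x ≠ ⊤ := by
    intro h
    have := D_one_le D hD
    rw [← hx, h] at this
    simp at this
  have hadd := hD.additive (fun _ : Fin 1 => (1:ℝ)) (fun _ => 1) (fun _ : Fin 1 => (1:ℝ))
    (fun _ => 1) probVec_one probVec_one probVec_one probVec_one
  have hk : kron (fun _ : Fin 1 => (1:ℝ)) (fun _ : Fin 1 => (1:ℝ)) =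
      (fun _ : Fin (1*1) => (1:ℝ)) := by funext i; simp [kron]
  rw [hk] at hadd
  have h11 : D (1*1) (fun _ : Fin (1*1) => (1:ℝ)) (fun _ => 1) = x := rfl
  rw [h11] at hadd
  have : x + 0 = x + x := by rw [add_zero]; exact hadd
  exact ((ENNReal.add_right_inj hne).1 this).symm
lemma kpow_D (D : (n : ℕ) → (Fin n → ℝ) → (Fin n → ℝ) → ℝ≥0∞)
    (hD : IsRelativeEntropy D) {n : ℕ} (p q : Fin n → ℝ)
    (hp : IsProbVec p) (hq : IsProbVec q) (m : ℕ) :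
    D (n ^ m) (kpow p m) (kpow q m) = (m : ℝ≥0∞) * D n p q := by
  induction m with
  | zero =>
    show D 1 (fun _ => 1) (fun _ => 1) = _
    rw [D_one D hD]; simp
  | succ m ih =>
    have h := hD.additive (kpow p m) (kpow q m) p q
      (kpow_probVec hp m) (kpow_probVec hq m) hp hq
    show D (n ^ m * n) (kron (kpow p m) p) (kron (kpow q m) q) = _
    rw [h, ih]
    push_cast
    ring

lemma kpow_e1_spec (c : ℝ) (h0 : 0 ≤ c) (h1 : c ≤ 1) (m : ℕ) :
    ∃ i₀ : Fin (2 ^ m),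
      (∀ j, kpow ![(1:ℝ), 0] m j = if j = i₀ then 1 else 0) ∧
      kpow ![c, 1 - c] m i₀ = c ^ m ∧ (∀ j, 0 ≤ kpow ![c, 1 - c] m j) := by
  induction m with
  | zero =>
    refine ⟨0, fun j => ?_, by simp [kpow], fun j => zero_le_one⟩
    have : j = 0 := Fin.ext (Nat.lt_one_iff.1 j.isLt)
    simp [this, kpow]
  | succ m ih =>
    obtain ⟨i₀, hP, hV, hVn⟩ := ih
    refine ⟨finProdFinEquiv (i₀, 0), fun j => ?_, ?_, fun j => ?_⟩
    · show kron (kpow ![(1:ℝ),0] m) ![(1:ℝ),0] j = _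
      unfold kron
      rw [hP, vec2_apply]
      have hiff : j = finProdFinEquiv (i₀, 0) ↔
          (finProdFinEquiv.symm j).1 = i₀ ∧ (finProdFinEquiv.symm j).2 = 0 := by
        constructor
        · rintro rfl
          simp
        · rintro ⟨h1, h2⟩
          have : finProdFinEquiv.symm j = (i₀, 0) := Prod.ext h1 h2
          rw [← this]
          exact (Equiv.apply_symm_apply _ _).symm
      split_ifs with ha hb hb <;> simp_all
    · show kron (kpow ![c, 1-c] m) ![c, 1-c] (finProdFinEquiv (i₀, 0)) = _
      unfold kron
      rw [Equiv.symm_apply_apply]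
      simp [hV, pow_succ]
    · show 0 ≤ kron (kpow ![c, 1-c] m) ![c, 1-c] j
      unfold kron
      refine mul_nonneg (hVn _) ?_
      rw [vec2_apply]
      split_ifs <;> linarith

lemma kpow_u2 (m : ℕ) (j : Fin (2 ^ m)) :
    kpow ![(1:ℝ)/2, 1/2] m j = ((2 ^ m : ℕ) : ℝ)⁻¹ := by
  induction m with
  | zero => simp [kpow]
  | succ m ih =>
    show kron (kpow ![(1:ℝ)/2, 1/2] m) ![(1:ℝ)/2, 1/2] j = _
    unfold kron
    rw [ih, vec2_apply]
    have : ((2 ^ (m+1) : ℕ) : ℝ) = ((2^m : ℕ) : ℝ) * 2 := by push_cast; ring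
    rw [this, mul_inv]
    split_ifs <;> norm_num
lemma sum_ite_const {N : ℕ} (i₀ : Fin N) (a b : ℝ) :
    ∑ i, (if i = i₀ then a else b) = a + ((N:ℝ) - 1) * b := by
  have : ∀ i : Fin N, (if i = i₀ then a else b) = b + (if i = i₀ then a - b else 0) := by
    intro i; split_ifs <;> ring
  rw [Finset.sum_congr rfl fun i _ => this i, Finset.sum_add_distrib,
    Finset.sum_const, Finset.sum_ite_eq']
  simp
  ring

lemma relmaj_from_flat {N n : ℕ} (hN : 2 ≤ N) (P Q : Fin N → ℝ) (i₀ : Fin N)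
    (hP : ∀ j, P j = if j = i₀ then 1 else 0) (hQ : ∀ j, Q j = ((N : ℕ) : ℝ)⁻¹)
    (p q : Fin n → ℝ) (hp : IsProbVec p) (hq : IsProbVec q)
    (h : ∀ j, p j ≤ (N : ℝ) * q j) : RelMaj P Q p q := by
  have hN0 : (0:ℝ) < N := by positivity
  have hN1 : (0:ℝ) < (N:ℝ) - 1 := by
    have : (2:ℝ) ≤ N := by exact_mod_cast hN
    linarith
  set r : Fin n → ℝ := fun j => ((N:ℝ) * q j - p j) / ((N:ℝ) - 1) with hr
  have hrsum : ∑ j, r j = 1 := by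
    rw [hr]
    rw [← Finset.sum_div, Finset.sum_sub_distrib, ← Finset.mul_sum, hq.2, hp.2]
    field_simp
  refine ⟨Matrix.of fun i j => if i = i₀ then p j else r j, ⟨?_, ?_⟩, ?_, ?_⟩
  · intro i j
    rw [Matrix.of_apply]
    split_ifs with hi
    · exact hp.1 j
    · exact div_nonneg (by linarith [h j]) (le_of_lt hN1)
  · intro i
    simp only [Matrix.of_apply]
    by_cases hi : i = i₀
    · simp only [hi, if_pos rfl]; exact hp.2
    · simp only [if_neg hi]; exact hrsum
  · funext j
    simp only [Matrix.vecMul, dotProduct, Matrix.of_apply, hP]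
    have : ∀ i : Fin N, (if i = i₀ then (1:ℝ) else 0) * (if i = i₀ then p j else r j)
        = if i = i₀ then p j else 0 := by
      intro i; split_ifs <;> ring
    rw [Finset.sum_congr rfl fun i _ => this i, sum_ite_const]
    ring
  · funext j
    simp only [Matrix.vecMul, dotProduct, Matrix.of_apply, hQ]
    have : ∀ i : Fin N, ((N:ℕ):ℝ)⁻¹ * (if i = i₀ then p j else r j)
        = if i = i₀ then (N:ℝ)⁻¹ * p j else (N:ℝ)⁻¹ * r j := by
      intro i; split_ifs <;> ring
    rw [Finset.sum_congr rfl fun i _ => this i, sum_ite_const, hr]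
    field_simp
    ring
lemma D_le_pow (D : (n : ℕ) → (Fin n → ℝ) → (Fin n → ℝ) → ℝ≥0∞)
    (hD : IsRelativeEntropy D) {n : ℕ} (p q : Fin n → ℝ)
    (hp : IsProbVec p) (hq : IsProbVec q) (k : ℕ) (hk : 1 ≤ k)
    (h : ∀ j, p j ≤ (2:ℝ) ^ k * q j) : D n p q ≤ (k : ℝ≥0∞) := by
  obtain ⟨i₀, hP, -, -⟩ := kpow_e1_spec (1/2) (by norm_num) (by norm_num) k
  have hN : 2 ≤ 2 ^ k := by
    calc 2 = 2 ^ 1 := (pow_one 2).symm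
    _ ≤ 2 ^ k := Nat.pow_le_pow_right (by norm_num) hk
  have hrm := relmaj_from_flat hN (kpow ![(1:ℝ),0] k) (kpow ![(1:ℝ)/2, 1/2] k) i₀ hP
    (kpow_u2 k) p q hp hq (by intro j; have := h j; push_cast; exact this)
  have hdpi := hD.dpi _ _ _ _ (kpow_probVec probVec_e1 k) (kpow_probVec probVec_u2 k)
    hp hq hrm
  calc D n p q ≤ D (2^k) (kpow ![(1:ℝ),0] k) (kpow ![(1:ℝ)/2, 1/2] k) := hdpi
  _ = (k : ℝ≥0∞) * D 2 ![(1:ℝ),0] ![(1:ℝ)/2, 1/2] :=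
      kpow_D D hD _ _ probVec_e1 probVec_u2 k
  _ = (k : ℝ≥0∞) := by
      have : Real.logb 2 2 = 1 := Real.logb_self_eq_one (b:=2) (by norm_num)
      rw [hD.normalized, this]
      simp
lemma D_e1_vc_le (D : (n : ℕ) → (Fin n → ℝ) → (Fin n → ℝ) → ℝ≥0∞)
    (hD : IsRelativeEntropy D) {c : ℝ} (hc0 : 0 < c) (hc1 : c ≤ 1) :
    D 2 ![1, 0] ![c, 1 - c] ≤ ENNReal.ofReal (Real.logb 2 c⁻¹) := by
  set L : ℝ := Real.logb 2 c⁻¹ with hL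
  have hc0' : (0:ℝ) < c⁻¹ := by positivity
  have hL0 : 0 ≤ L := Real.logb_nonneg (by norm_num) (one_le_inv_iff₀.2 ⟨hc0, hc1⟩)
  set x := D 2 ![1, 0] ![c, 1 - c] with hx
  -- the key bound for every m ≥ 1
  have key : ∀ m : ℕ, 1 ≤ m → (m : ℝ≥0∞) * x ≤ ((⌈(m:ℝ) * L⌉₊ + 1 : ℕ) : ℝ≥0∞) := by
    intro m hm
    set k : ℕ := ⌈(m:ℝ) * L⌉₊ + 1 with hk
    have hkL : (m:ℝ) * L ≤ k := by
      calc (m:ℝ) * L ≤ ⌈(m:ℝ) * L⌉₊ := Nat.le_ceil _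
      _ ≤ k := by rw [hk]; push_cast; linarith
    have hcm : c⁻¹ ^ m ≤ (2:ℝ) ^ k := by
      have hpos : (0:ℝ) < c⁻¹ ^ m := pow_pos hc0' m
      calc c⁻¹ ^ m = (2:ℝ) ^ (Real.logb 2 (c⁻¹ ^ m)) :=
            (Real.rpow_logb (by norm_num) (by norm_num) hpos).symm
      _ = (2:ℝ) ^ ((m:ℝ) * L) := by rw [Real.logb_pow]
      _ ≤ (2:ℝ) ^ ((k:ℕ):ℝ) := Real.rpow_le_rpow_of_exponent_le one_le_two hkL
      _ = (2:ℝ) ^ k := Real.rpow_natCast 2 k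
    obtain ⟨i₀, hP, hV, hVn⟩ := kpow_e1_spec c (le_of_lt hc0) hc1 m
    have hcond : ∀ j, kpow ![(1:ℝ),0] m j ≤ (2:ℝ) ^ k * kpow ![c, 1-c] m j := by
      intro j
      rw [hP j]
      by_cases hj : j = i₀
      · rw [if_pos hj, hj, hV]
        have h1 : (1:ℝ) = c ^ m * (c⁻¹ ^ m) := by
          rw [← mul_pow, mul_inv_cancel₀ (ne_of_gt hc0), one_pow]
        rw [h1]
        rw [mul_comm ((2:ℝ)^k) (c^m)]
        exact mul_le_mul_of_nonneg_left hcm (le_of_lt (pow_pos hc0 m))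
      · rw [if_neg hj]
        exact mul_nonneg (by positivity) (hVn j)
    have hle := D_le_pow D hD (kpow ![(1:ℝ),0] m) (kpow ![c,1-c] m)
      (kpow_probVec probVec_e1 m) (kpow_probVec (probVec_vc (le_of_lt hc0) hc1) m)
      k (Nat.le_add_left 1 _) hcond
    rw [kpow_D D hD _ _ probVec_e1 (probVec_vc (le_of_lt hc0) hc1) m] at hle
    exact hle
  have hxne : x ≠ ⊤ := by
    intro hT
    have := key 1 le_rfl
    rw [hT] at this
    simp at this
  -- real-valued bound
  have hreal : ∀ m : ℕ, 1 ≤ m → (m:ℝ) * x.toReal ≤ (m:ℝ) * L + 2 := by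
    intro m hm
    have h := key m hm
    have h2 := ENNReal.toReal_mono (by simp) h
    rw [ENNReal.toReal_mul, ENNReal.toReal_natCast, ENNReal.toReal_natCast] at h2
    have h3 : ((⌈(m:ℝ) * L⌉₊ + 1 : ℕ) : ℝ) ≤ (m:ℝ) * L + 2 := by
      push_cast
      have := Nat.ceil_lt_add_one (by positivity : (0:ℝ) ≤ (m:ℝ) * L)
      linarith
    linarith
  have hfinal : x.toReal ≤ L := by
    by_contra hcon
    push_neg at hcon
    set ε := x.toReal - L with hε
    have hε0 : 0 < ε := by linarith
    set m : ℕ := ⌈2/ε⌉₊ + 1 with hm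
    have hm1 : 1 ≤ m := Nat.le_add_left 1 _
    have hmR : 2/ε < (m:ℝ) := by
      calc 2/ε ≤ ⌈2/ε⌉₊ := Nat.le_ceil _
      _ < (m:ℝ) := by rw [hm]; push_cast; linarith
    have hm0 : (0:ℝ) < m := lt_trans (by positivity) hmR
    have h := hreal m hm1
    have h2 : 2 < ε * m := by
      rw [div_lt_iff₀ hε0] at hmR
      linarith [hmR]
    nlinarith [h, h2]
  calc x = ENNReal.ofReal x.toReal := (ENNReal.ofReal_toReal hxne).symm
  _ ≤ ENNReal.ofReal L := ENNReal.ofReal_le_ofReal hfinal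
lemma relmaj_flag {n : ℕ} (p q qt : Fin n → ℝ)
    (hp : IsProbVec p) (hq : IsProbVec q) (hqt : IsProbVec qt) (c : ℝ)
    (hc0 : 0 < c) (hc1 : c < 1) (h : ∀ i, c * q i ≤ qt i) :
    RelMaj (kron p ![1, 0]) (kron q ![c, 1 - c]) p qt := by
  have h1c : (0:ℝ) < 1 - c := by linarith
  set r : Fin n → ℝ := fun j => (qt j - c * q j) / (1 - c) with hr
  have hrsum : ∑ j, r j = 1 := by
    rw [hr]
    rw [← Finset.sum_div, Finset.sum_sub_distrib, ← Finset.mul_sum, hqt.2, hq.2]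
    field_simp
  refine ⟨Matrix.of fun i j =>
    if (finProdFinEquiv.symm i).2 = 0 then (if j = (finProdFinEquiv.symm i).1 then 1 else 0)
    else r j, ⟨?_, ?_⟩, ?_, ?_⟩
  · intro i j
    rw [Matrix.of_apply]
    split_ifs
    · exact zero_le_one
    · exact le_rfl
    · exact div_nonneg (by linarith [h j]) (le_of_lt h1c)
  · intro i
    simp only [Matrix.of_apply]
    by_cases hb : (finProdFinEquiv.symm i).2 = 0
    · simp only [if_pos hb, Finset.sum_ite_eq' Finset.univ]
      simp
    · simp only [if_neg hb]
      exact hrsum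
  · funext j
    simp only [Matrix.vecMul, dotProduct, Matrix.of_apply]
    have step2 : (∑ x : Fin n × Fin 2, p x.1 * ![(1:ℝ),0] x.2 *
        (if x.2 = 0 then (if j = x.1 then 1 else 0) else r j)) = p j := by
      rw [Fintype.sum_prod_type]
      simp [Fin.sum_univ_two, mul_ite, Finset.sum_ite_eq]
    exact (Fintype.sum_equiv finProdFinEquiv.symm _ _ (fun i => rfl)).trans step2
  · funext j
    simp only [Matrix.vecMul, dotProduct, Matrix.of_apply]
    have step2 : (∑ x : Fin n × Fin 2, q x.1 * ![c, 1-c] x.2 *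
        (if x.2 = 0 then (if j = x.1 then 1 else 0) else r j)) = qt j := by
      rw [Fintype.sum_prod_type]
      simp only [Fin.sum_univ_two, Matrix.cons_val_zero, Matrix.cons_val_one, Matrix.head_cons,
        if_pos rfl, if_true, if_neg (by simp : ¬ ((1:Fin 2) = 0))]
      rw [Finset.sum_add_distrib]
      have h1 : ∑ a, q a * c * (if j = a then (1:ℝ) else 0) = c * q j := by
        rw [Finset.sum_congr rfl (fun a _ => by rw [mul_ite, mul_one, mul_zero] :
          ∀ a ∈ Finset.univ, q a * c * (if j = a then (1:ℝ) else 0)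
            = if j = a then q a * c else 0)]
        rw [Finset.sum_ite_eq]
        simp [mul_comm]
      have h2 : ∑ a, q a * (1-c) * r j = (1-c) * r j := by
        rw [show (fun a => q a * (1-c) * r j) = (fun a => q a * ((1-c) * r j)) from
          funext fun a => by ring]
        rw [← Finset.sum_mul, hq.2, one_mul]
      rw [h1, h2, hr]
      field_simp
      ring
    exact (Fintype.sum_equiv finProdFinEquiv.symm _ _ (fun i => rfl)).trans step2
lemma D_shift (D : (n : ℕ) → (Fin n → ℝ) → (Fin n → ℝ) → ℝ≥0∞)
    (hD : IsRelativeEntropy D) {n : ℕ} (p q qt : Fin n → ℝ)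
    (hp : IsProbVec p) (hq : IsProbVec q) (hqt : IsProbVec qt) (c : ℝ)
    (hc0 : 0 < c) (hc1 : c ≤ 1) (h : ∀ i, c * q i ≤ qt i) :
    D n p qt ≤ D n p q + ENNReal.ofReal (Real.logb 2 c⁻¹) := by
  rcases eq_or_lt_of_le hc1 with hc | hc
  · -- c = 1 : then qt = q
    have hqq : qt = q := by
      have hle : ∀ i, q i ≤ qt i := fun i => by have := h i; subst hc; linarith
      funext i
      by_contra hne
      have hlt : q i < qt i := lt_of_le_of_ne (hle i) (Ne.symm hne)
      have : ∑ j, q j < ∑ j, qt j :=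
        Finset.sum_lt_sum (fun j _ => hle j) ⟨i, Finset.mem_univ i, hlt⟩
      rw [hq.2, hqt.2] at this
      exact lt_irrefl _ this
    rw [hqq]
    exact le_self_add
  · have hrm := relmaj_flag p q qt hp hq hqt c hc0 hc h
    have hvc : IsProbVec ![c, 1 - c] := probVec_vc (le_of_lt hc0) hc1
    have hdpi := hD.dpi _ _ _ _ (kron_probVec hp probVec_e1) (kron_probVec hq hvc)
      hp hqt hrm
    have hadd := hD.additive p q ![(1:ℝ), 0] ![c, 1 - c] hp hq probVec_e1 hvc
    calc D n p qt ≤ D (n * 2) (kron p ![1, 0]) (kron q ![c, 1 - c]) := hdpi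
    _ = D n p q + D 2 ![1, 0] ![c, 1 - c] := hadd
    _ ≤ D n p q + ENNReal.ofReal (Real.logb 2 c⁻¹) :=
        add_le_add_right (D_e1_vc_le D hD hc0 hc1) _
lemma minEntry_set_eq {n : ℕ} (q : Fin n → ℝ) : { x | ∃ i, x = q i } = Set.range q := by
  ext x; simp [eq_comm]

lemma supDist_set_eq {n : ℕ} (q q' : Fin n → ℝ) :
    { x | ∃ i, x = |q i - q' i| } = Set.range (fun i => |q i - q' i|) := by
  ext x; simp [eq_comm]

lemma minEntry_le {n : ℕ} (q : Fin n → ℝ) (i : Fin n) : minEntry q ≤ q i := by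
  rw [minEntry, minEntry_set_eq]
  exact csInf_le (Set.finite_range q).bddBelow ⟨i, rfl⟩

lemma le_minEntry {n : ℕ} [Nonempty (Fin n)] (q : Fin n → ℝ) (a : ℝ)
    (h : ∀ i, a ≤ q i) : a ≤ minEntry q := by
  rw [minEntry, minEntry_set_eq]
  exact le_csInf (Set.range_nonempty q) (by rintro x ⟨i, rfl⟩; exact h i)

lemma minEntry_pos {n : ℕ} [Nonempty (Fin n)] (q : Fin n → ℝ) (h : ∀ i, 0 < q i) :
    0 < minEntry q := by
  have hmem : minEntry q ∈ { x | ∃ i, x = q i } := by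
    rw [minEntry, minEntry_set_eq]
    exact Set.Nonempty.csInf_mem (Set.range_nonempty q) (Set.finite_range q)
  obtain ⟨i, hi⟩ := hmem
  rw [hi]; exact h i

lemma abs_le_supDist {n : ℕ} (q q' : Fin n → ℝ) (i : Fin n) :
    |q i - q' i| ≤ supDist q q' := by
  rw [supDist, supDist_set_eq]
  exact le_csSup (Set.finite_range _).bddAbove ⟨i, rfl⟩

lemma supDist_le {n : ℕ} [Nonempty (Fin n)] (q q' : Fin n → ℝ) (a : ℝ)
    (h : ∀ i, |q i - q' i| ≤ a) : supDist q q' ≤ a := by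
  rw [supDist, supDist_set_eq]
  exact csSup_le (Set.range_nonempty _) (by rintro x ⟨i, rfl⟩; exact h i)

lemma supDist_nonneg {n : ℕ} [Nonempty (Fin n)] (q q' : Fin n → ℝ) :
    0 ≤ supDist q q' := le_trans (abs_nonneg _) (abs_le_supDist q q' (Classical.arbitrary _))

lemma supDist_comm {n : ℕ} (q q' : Fin n → ℝ) : supDist q q' = supDist q' q := by
  unfold supDist
  congr 1
  ext x
  constructor <;> rintro ⟨i, rfl⟩ <;> exact ⟨i, (abs_sub_comm _ _)⟩

lemma probVec_entry_le_one {n : ℕ} {p : Fin n → ℝ} (hp : IsProbVec p) (i : Fin n) :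
    p i ≤ 1 := by
  rw [← hp.2]
  exact Finset.single_le_sum (fun j _ => hp.1 j) (Finset.mem_univ i)

lemma D_ne_top (D : (n : ℕ) → (Fin n → ℝ) → (Fin n → ℝ) → ℝ≥0∞)
    (hD : IsRelativeEntropy D) {n : ℕ} (p q : Fin n → ℝ)
    (hp : IsProbVec p) (hq : IsProbVec q) (hqpos : ∀ i, 0 < q i) :
    D n p q ≠ ⊤ := by
  have hn : n ≠ 0 := by
    rintro rfl
    have := hp.2
    simp at this
  haveI : Nonempty (Fin n) := ⟨⟨0, Nat.pos_of_ne_zero hn⟩⟩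
  have hμ : 0 < minEntry q := minEntry_pos q hqpos
  obtain ⟨k, hk⟩ := pow_unbounded_of_one_lt (minEntry q)⁻¹ (by norm_num : (1:ℝ) < 2)
  set k' := max k 1 with hk'
  have hkk : (2:ℝ) ^ k ≤ 2 ^ k' := pow_le_pow_right₀ (by norm_num) (le_max_left _ _)
  have h : ∀ j, p j ≤ (2:ℝ) ^ k' * q j := by
    intro j
    have h1 : p j ≤ 1 := probVec_entry_le_one hp j
    have h2 : (1:ℝ) ≤ 2 ^ k' * minEntry q := by
      rw [← inv_mul_cancel₀ (ne_of_gt hμ)]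
      exact mul_le_mul_of_nonneg_right (le_trans (le_of_lt hk) hkk) (le_of_lt hμ)
    calc p j ≤ 1 := h1
    _ ≤ 2 ^ k' * minEntry q := h2
    _ ≤ 2 ^ k' * q j := mul_le_mul_of_nonneg_left (minEntry_le q j) (by positivity)
  have := D_le_pow D hD p q hp hq k' (le_max_right _ _) h
  exact ne_top_of_le_ne_top (by simp) this
lemma quant (D : (n : ℕ) → (Fin n → ℝ) → (Fin n → ℝ) → ℝ≥0∞)
    (hD : IsRelativeEntropy D) {n : ℕ} (p q qt : Fin n → ℝ) (hp : IsProbVec p)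
    (hq : IsProbVec q) (hqpos : ∀ i, 0 < q i) (hqt : IsProbVec qt)
    (hqtpos : ∀ i, 0 < qt i)
    (hlt : supDist q qt < min (minEntry q) (minEntry qt)) :
    D n p q ≠ ⊤ ∧ D n p qt ≠ ⊤ ∧
      |(D n p q).toReal - (D n p qt).toReal| ≤
        Real.logb 2 (1 + supDist q qt / min (minEntry q) (minEntry qt)) := by
  have hn : n ≠ 0 := by rintro rfl; have := hp.2; simp at this
  haveI : Nonempty (Fin n) := ⟨⟨0, Nat.pos_of_ne_zero hn⟩⟩
  set d := supDist q qt with hd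
  set μ := min (minEntry q) (minEntry qt) with hμ
  have hμ0 : 0 < μ := lt_min (minEntry_pos q hqpos) (minEntry_pos qt hqtpos)
  have hd0 : 0 ≤ d := supDist_nonneg q qt
  have hone : (1:ℝ) ≤ 1 + d / μ := by
    have : 0 ≤ d / μ := div_nonneg hd0 (le_of_lt hμ0)
    linarith
  have hpos : (0:ℝ) < 1 + d / μ := lt_of_lt_of_le one_pos hone
  set c := (1 + d / μ)⁻¹ with hc
  have hc0 : 0 < c := inv_pos.2 hpos
  have hc1 : c ≤ 1 := inv_le_one_of_one_le₀ hone
  have hcinv : c⁻¹ = 1 + d / μ := inv_inv _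
  have key : ∀ a b : Fin n → ℝ, (∀ i, 0 < b i) → IsProbVec b →
      (∀ i, a i - b i ≤ d) → (∀ i, μ ≤ b i) → ∀ i, c * a i ≤ b i := by
    intro a b hbpos hb hab hμb i
    have h1 : d ≤ d / μ * b i := by
      have : d / μ * μ ≤ d / μ * b i :=
        mul_le_mul_of_nonneg_left (hμb i) (div_nonneg hd0 (le_of_lt hμ0))
      rw [div_mul_cancel₀ d (ne_of_gt hμ0)] at this
      exact this
    have h2 : a i ≤ (1 + d / μ) * b i := by nlinarith [hab i]
    calc c * a i ≤ c * ((1 + d / μ) * b i) :=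
          mul_le_mul_of_nonneg_left h2 (le_of_lt hc0)
    _ = b i := by rw [← mul_assoc, inv_mul_cancel₀ (ne_of_gt hpos), one_mul]
  have hs1 : ∀ i, c * q i ≤ qt i := by
    refine key q qt hqtpos hqt (fun i => ?_) (fun i => le_trans (min_le_right _ _) (minEntry_le qt i))
    exact le_trans (le_abs_self _) (abs_le_supDist q qt i)
  have hs2 : ∀ i, c * qt i ≤ q i := by
    refine key qt q hqpos hq (fun i => ?_) (fun i => le_trans (min_le_left _ _) (minEntry_le q i))
    calc qt i - q i ≤ |qt i - q i| := le_abs_self _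
    _ = |q i - qt i| := abs_sub_comm _ _
    _ ≤ d := abs_le_supDist q qt i
  set L := Real.logb 2 (1 + d / μ) with hLdef
  have hL0 : 0 ≤ L := Real.logb_nonneg (by norm_num) hone
  have b1 : D n p qt ≤ D n p q + ENNReal.ofReal L := by
    have := D_shift D hD p q qt hp hq hqt c hc0 hc1 hs1
    rwa [hcinv] at this
  have b2 : D n p q ≤ D n p qt + ENNReal.ofReal L := by
    have := D_shift D hD p qt q hp hqt hq c hc0 hc1 hs2
    rwa [hcinv] at this
  have fin1 : D n p q ≠ ⊤ := D_ne_top D hD p q hp hq hqpos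
  have fin2 : D n p qt ≠ ⊤ := D_ne_top D hD p qt hp hqt hqtpos
  refine ⟨fin1, fin2, ?_⟩
  have t1 : (D n p q).toReal ≤ (D n p qt).toReal + L := by
    have h := ENNReal.toReal_mono (by simp [fin2, ENNReal.add_ne_top] : D n p qt + ENNReal.ofReal L ≠ ⊤) b2
    rwa [ENNReal.toReal_add fin2 ENNReal.ofReal_ne_top, ENNReal.toReal_ofReal hL0] at h
  have t2 : (D n p qt).toReal ≤ (D n p q).toReal + L := by
    have h := ENNReal.toReal_mono (by simp [fin1, ENNReal.add_ne_top] : D n p q + ENNReal.ofReal L ≠ ⊤) b1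
    rwa [ENNReal.toReal_add fin1 ENNReal.ofReal_ne_top, ENNReal.toReal_ofReal hL0] at h
  rw [abs_sub_le_iff]
  constructor <;> linarith

/-- Lipschitz-type continuity of `q ↦ 𝔻(p‖q)` on `P_{>0}(n)`:
whenever `‖q − q̃‖_∞ < min{min_i q_i, min_i q̃_i}`, both values are finite and
`|𝔻(p‖q) − 𝔻(p‖q̃)| ≤ log(1 + ‖q − q̃‖_∞ / min{min_i q_i, min_i q̃_i})`
(binary logarithm); in particular `q ↦ 𝔻(p‖q)` is continuous on `P_{>0}(n)`. -/
theorem stmt7 (D : (n : ℕ) → (Fin n → ℝ) → (Fin n → ℝ) → ℝ≥0∞)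
    (hD : IsRelativeEntropy D) (n : ℕ) (p : Fin n → ℝ) (hp : IsProbVec p) :
    (∀ q qt : Fin n → ℝ, IsProbVec q → (∀ i, 0 < q i) → IsProbVec qt → (∀ i, 0 < qt i) →
      supDist q qt < min (minEntry q) (minEntry qt) →
      D n p q ≠ ⊤ ∧ D n p qt ≠ ⊤ ∧
        |(D n p q).toReal - (D n p qt).toReal| ≤
          Real.logb 2 (1 + supDist q qt / min (minEntry q) (minEntry qt))) ∧
    ContinuousOn (fun q => D n p q) { q : Fin n → ℝ | IsProbVec q ∧ ∀ i, 0 < q i } := by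
  constructor
  · intro q qt hq hqpos hqt hqtpos hlt
    exact quant D hD p q qt hp hq hqpos hqt hqtpos hlt
  · set S := { q : Fin n → ℝ | IsProbVec q ∧ ∀ i, 0 < q i } with hS
    intro q0 hq0
    obtain ⟨hq0p, hq0pos⟩ := hq0
    have hn : n ≠ 0 := by rintro rfl; have := hp.2; simp at this
    haveI : Nonempty (Fin n) := ⟨⟨0, Nat.pos_of_ne_zero hn⟩⟩
    set μ0 := minEntry q0 with hμ0def
    have hμ0 : 0 < μ0 := minEntry_pos q0 hq0pos
    have hfin0 : D n p q0 ≠ ⊤ := D_ne_top D hD p q0 hp hq0p hq0pos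
    have key : Filter.Tendsto (fun q => (D n p q).toReal) (nhdsWithin q0 S)
        (nhds ((D n p q0).toReal)) := by
      rw [Metric.tendsto_nhds]
      intro ε hε
      have h2ε : (1:ℝ) < (2:ℝ) ^ ε := by
        rw [Real.one_lt_rpow_iff_of_pos (by norm_num)]
        exact Or.inl ⟨by norm_num, hε⟩
      set δ := min (μ0/4) ((3*μ0/4) * (((2:ℝ) ^ ε - 1)/2)) with hδdef
      have hδ0 : 0 < δ := by
        apply lt_min (by linarith)
        have : 0 < ((2:ℝ) ^ ε - 1)/2 := by linarith
        positivity
      have hδ1 : δ ≤ μ0/4 := min_le_left _ _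
      have hev0 : ∀ i, ∀ᶠ q in nhds q0, |q i - q0 i| < δ := by
        intro i
        have hc := ((continuous_apply i).tendsto q0)
        have := Metric.tendsto_nhds.1 hc δ hδ0
        simpa [Real.dist_eq] using this
      have hev1 : ∀ᶠ q in nhds q0, ∀ i, |q i - q0 i| < δ := Filter.eventually_all.2 hev0
      filter_upwards [hev1.filter_mono nhdsWithin_le_nhds, self_mem_nhdsWithin]
        with q hqδ hqS
      obtain ⟨hqp, hqpos⟩ := hqS
      set d := supDist q q0 with hddef
      set μ := min (minEntry q) (minEntry q0) with hμdef
      have hdδ : d ≤ δ := supDist_le q q0 δ (fun i => le_of_lt (hqδ i))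
      have hminq : μ0 - δ ≤ minEntry q :=
        le_minEntry q _ (fun i => by
          have h1 := hqδ i
          have h2 := minEntry_le q0 i
          rw [abs_lt] at h1
          linarith)
      have hμ3 : 3*μ0/4 ≤ μ := by
        apply le_min <;> [skip; linarith [hδ1]]
        linarith
      have hμpos : 0 < μ := by linarith
      have hlt : d < μ := by linarith
      obtain ⟨hf1, hf2, habs⟩ := quant D hD p q q0 hp hqp hqpos hq0p hq0pos hlt
      rw [Real.dist_eq]
      have hd0 : 0 ≤ d := supDist_nonneg q q0
      have hfrac : d / μ ≤ ((2:ℝ) ^ ε - 1)/2 := by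
        have h1 : d / μ ≤ δ / (3*μ0/4) :=
          div_le_div₀ hδ0.le hdδ (by linarith) hμ3
        have h2 : δ / (3*μ0/4) ≤ ((2:ℝ) ^ ε - 1)/2 := by
          rw [div_le_iff₀ (by linarith : (0:ℝ) < 3*μ0/4)]
          calc δ ≤ (3*μ0/4) * (((2:ℝ) ^ ε - 1)/2) := min_le_right _ _
          _ = ((2:ℝ) ^ ε - 1)/2 * (3*μ0/4) := by ring
        linarith
      have hbound : Real.logb 2 (1 + d / μ) < ε := by
        rw [Real.logb_lt_iff_lt_rpow (by norm_num) (by positivity)]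
        have : d / μ ≥ 0 := div_nonneg hd0 hμpos.le
        linarith
      calc |(D n p q).toReal - (D n p q0).toReal| ≤ Real.logb 2 (1 + d / μ) := habs
      _ < ε := hbound
    have := (ENNReal.continuous_ofReal.tendsto ((D n p q0).toReal)).comp key
    rw [ENNReal.ofReal_toReal hfin0] at this
    refine this.congr' ?_ |>.mono_left le_rfl
    filter_upwards [self_mem_nhdsWithin] with q hqS
    exact ENNReal.ofReal_toReal (D_ne_top D hD p q hp hqS.1 hqS.2)
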